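/- Let λ, a ∈ ℝ and set μ_j := −j⁴π⁴ + λ j²π² and D_j := λ² − 4(a + μ_j) = (2j²π² − λ)² − 4a for positive integers j. Then there exist a constant C > 0 and a positive integer J such that for every j ≥ J one has D_j > 0, −λ + √D_j > 0, λ + √D_j > 0, and the two estimates |√((−λ + √D_j)/2) − (jπ − λ/(2jπ))| ≤ C/j³ and |√((λ + √D_j)/2) − (jπ − a/(4j³π³))| ≤ C/j⁵. -/

import Mathlib

open Real

private lemma abs_sub_le' (A B : ℝ) : |A - B| ≤ |A| + |B| := by
  calc |A - B| = |A + -B| := by rw [sub_eq_add_neg]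
  _ ≤ |A| + |-B| := abs_add_le _ _
  _ = |A| + |B| := by rw [abs_neg]

private lemma sqrt_close (u v : ℝ) (hu : 0 ≤ u) (hv : 0 ≤ v) :
    |Real.sqrt u - v| * v ≤ |u - v ^ 2| := by
  have hs : Real.sqrt u ^ 2 = u := Real.sq_sqrt hu
  have h1 : |Real.sqrt u - v| * (Real.sqrt u + v) = |u - v ^ 2| := by
    rw [← abs_of_nonneg (show (0:ℝ) ≤ Real.sqrt u + v by positivity), ← abs_mul]
    congr 1
    linear_combination hs
  nlinarith [abs_nonneg (Real.sqrt u - v), Real.sqrt_nonneg u]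

set_option maxHeartbeats 2000000 in
/-- Asymptotics of the roots of the characteristic equation r⁴ + λr² + a + μ_j = 0,
where μ_j := −j⁴π⁴ + λj²π² and D_j := λ² − 4(a + μ_j). -/
theorem stmt3 (lam a : ℝ) :
    ∃ C > (0 : ℝ), ∃ J : ℕ+, ∀ j : ℕ+, J ≤ j →
      (let mu : ℝ := -(j : ℝ) ^ 4 * π ^ 4 + lam * (j : ℝ) ^ 2 * π ^ 2
       let D : ℝ := lam ^ 2 - 4 * (a + mu)
       D > 0 ∧ -lam + Real.sqrt D > 0 ∧ lam + Real.sqrt D > 0 ∧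
        |Real.sqrt ((-lam + Real.sqrt D) / 2)
            - ((j : ℝ) * π - lam / (2 * (j : ℝ) * π))| ≤ C / (j : ℝ) ^ 3 ∧
        |Real.sqrt ((lam + Real.sqrt D) / 2)
            - ((j : ℝ) * π - a / (4 * (j : ℝ) ^ 3 * π ^ 3))| ≤ C / (j : ℝ) ^ 5) := by
  set M : ℝ := max (max |lam| |a|) 1 with hMdef
  have hM1 : (1:ℝ) ≤ M := le_max_right _ _
  have hMpos : (0:ℝ) < M := lt_of_lt_of_le one_pos hM1
  have hMM : M ≤ M ^ 2 := by nlinarith [hM1, hMpos]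
  have hlamM : |lam| ≤ M := le_trans (le_max_left _ _) (le_max_left _ _)
  have haM : |a| ≤ M := le_trans (le_max_right _ _) (le_max_left _ _)
  have habs_lam := abs_le.mp hlamM
  have habs_a := abs_le.mp haM
  refine ⟨M ^ 2, by positivity, ⟨Nat.ceil M + 1, Nat.succ_pos _⟩, ?_⟩
  intro j hj
  have hjn : (Nat.ceil M + 1 : ℕ) ≤ (j : ℕ) := hj
  have hjM : M ≤ (j : ℝ) := by
    have h1 : (Nat.ceil M : ℝ) ≤ (j : ℝ) := by
      exact_mod_cast Nat.le_of_succ_le hjn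
    exact le_trans (Nat.le_ceil M) h1
  have hj1 : (1:ℝ) ≤ (j : ℝ) := le_trans hM1 hjM
  have hπ : (3:ℝ) < π := by linarith [Real.pi_gt_three]
  have hπ3 : (27:ℝ) ≤ π ^ 3 := by
    have h := pow_le_pow_left₀ (by norm_num : (0:ℝ) ≤ 3) hπ.le 3
    norm_num at h; linarith
  have hπ5 : (243:ℝ) ≤ π ^ 5 := by
    have h := pow_le_pow_left₀ (by norm_num : (0:ℝ) ≤ 3) hπ.le 5
    norm_num at h; linarith
  intro mu D
  have hmu : mu = -(j : ℝ) ^ 4 * π ^ 4 + lam * (j : ℝ) ^ 2 * π ^ 2 := rfl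
  have hD0 : D = lam ^ 2 - 4 * (a + mu) := rfl
  clear_value mu D
  set x : ℝ := (j : ℝ) * π with hx
  have hxpos : 0 < x := by rw [hx]; positivity
  have hx3 : 3 ≤ x := by rw [hx]; nlinarith [hj1, hπ]
  have hxne : x ≠ 0 := ne_of_gt hxpos
  set s : ℝ := x ^ 2 with hs
  have hspos : 0 < s := by rw [hs]; positivity
  have hsM : 9 * M ≤ s := by
    have hjj : (j:ℝ) ≤ (j:ℝ) ^ 2 := by nlinarith [hj1]
    have hp2 : (9:ℝ) ≤ π ^ 2 := by nlinarith [hπ]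
    rw [hs, hx]
    nlinarith [hjM, hjj, hp2, hMpos, hj1, sq_nonneg ((j:ℝ))]
  have hs9 : 9 ≤ s := by nlinarith [hsM, hM1]
  have hD : D = (2 * s - lam) ^ 2 - 4 * a := by
    rw [hD0, hmu, hs, hx]; ring
  have hst : s ≤ 2 * s - lam := by nlinarith [habs_lam.2, hsM, hMpos]
  have hDlb : s ^ 2 / 4 ≤ D := by
    have hsq : s ^ 2 ≤ (2 * s - lam) ^ 2 := by nlinarith [hst, hspos]
    have hss : 9 * s ≤ s ^ 2 := by nlinarith [hs9, hspos]
    have h4a : 4 * a ≤ (4 / 81) * s ^ 2 := by linarith [habs_a.2, hsM, hss, hMpos]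
    rw [hD]; linarith
  have hDpos : 0 < D := by nlinarith [hDlb, hspos]
  set w : ℝ := Real.sqrt D with hw
  have hwnn : 0 ≤ w := Real.sqrt_nonneg D
  have hw2 : w ^ 2 = D := Real.sq_sqrt hDpos.le
  have hwlb : s / 2 ≤ w := by nlinarith [hw2, hwnn, hDlb, hspos]
  have hprod : (w - (2 * s - lam)) * (w + (2 * s - lam)) = -(4 * a) := by
    linear_combination hw2 + hD
  have hwt : s ≤ w + (2 * s - lam) := by linarith [hwnn, hst]
  have hwtnn : (0:ℝ) ≤ w + (2 * s - lam) := le_trans hspos.le hwt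
  have hediff : |w - (2 * s - lam)| * s ≤ 4 * M := by
    have h1 : |w - (2 * s - lam)| * (w + (2 * s - lam)) = 4 * |a| := by
      rw [← abs_of_nonneg hwtnn, ← abs_mul, hprod, abs_neg, abs_mul]
      norm_num
    have h2 : |w - (2 * s - lam)| * s ≤ |w - (2 * s - lam)| * (w + (2 * s - lam)) :=
      mul_le_mul_of_nonneg_left hwt (abs_nonneg _)
    linarith [h1, h2, haM]
  have hlam2 : lam ^ 2 ≤ M ^ 2 := by nlinarith [habs_lam.1, habs_lam.2, hMpos]
  have ha2 : a ^ 2 ≤ M ^ 2 := by nlinarith [habs_a.1, habs_a.2, hMpos]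
  have hu1pos : (0:ℝ) < -lam + w := by linarith [hwlb, habs_lam.2, hsM, hMpos]
  have hu2pos : (0:ℝ) < lam + w := by linarith [hwlb, habs_lam.1, hsM, hMpos]
  refine ⟨hDpos, hu1pos, hu2pos, ?_, ?_⟩
  · -- first estimate
    have hrw : x - lam / (2 * (j : ℝ) * π) = x - lam / (2 * x) := by
      rw [hx]; ring
    rw [hrw]
    have hv1 : x / 2 ≤ x - lam / (2 * x) := by
      have h1 : lam / (2 * x) ≤ M / (2 * x) := by gcongr; exact habs_lam.2
      have h2 : M / (2 * x) ≤ x / 2 := by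
        rw [div_le_div_iff₀ (by positivity) (by positivity)]
        linarith [hsM, hs, hspos]
      linarith
    have hv1pos : (0:ℝ) < x - lam / (2 * x) := lt_of_lt_of_le (by positivity) hv1
    have hid1 : (-lam + w) / 2 - (x - lam / (2 * x)) ^ 2
        = (w - (2 * s - lam)) / 2 - lam ^ 2 / (4 * s) := by
      rw [hs]; field_simp; ring
    have htri : |(-lam + w) / 2 - (x - lam / (2 * x)) ^ 2|
        ≤ |w - (2 * s - lam)| / 2 + lam ^ 2 / (4 * s) := by
      rw [hid1]
      refine (abs_sub_le' _ _).trans ?_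
      rw [abs_div, abs_of_nonneg (show (0:ℝ) ≤ lam ^ 2 / (4 * s) by positivity)]
      norm_num
    have hB1s : |(-lam + w) / 2 - (x - lam / (2 * x)) ^ 2| * s ≤ 3 * M ^ 2 := by
      have h1 := mul_le_mul_of_nonneg_right htri hspos.le
      have h2 : (|w - (2 * s - lam)| / 2 + lam ^ 2 / (4 * s)) * s
          = |w - (2 * s - lam)| * s / 2 + lam ^ 2 / 4 := by
        field_simp
      rw [h2] at h1
      linarith [h1, hediff, hlam2, hMM, hMpos]
    have hAle := sqrt_close ((-lam + w) / 2) (x - lam / (2 * x)) (by positivity) hv1pos.le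
    set A : ℝ := |Real.sqrt ((-lam + w) / 2) - (x - lam / (2 * x))| with hA'
    have hAnn : 0 ≤ A := abs_nonneg _
    have s1 : A * x ≤ 2 * |(-lam + w) / 2 - (x - lam / (2 * x)) ^ 2| := by
      have h1 : A * (x / 2) ≤ A * (x - lam / (2 * x)) :=
        mul_le_mul_of_nonneg_left hv1 hAnn
      linarith [hAle, h1]
    have s2 : A * x * s ≤ 6 * M ^ 2 := by
      have h1 := mul_le_mul_of_nonneg_right s1 hspos.le
      linarith [h1, hB1s]
    have hxs : x * s = (j : ℝ) ^ 3 * π ^ 3 := by rw [hs, hx]; ring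
    have s3 : 27 * (j : ℝ) ^ 3 ≤ x * s := by
      rw [hxs]
      have := mul_le_mul_of_nonneg_left hπ3 (by positivity : (0:ℝ) ≤ (j : ℝ) ^ 3)
      linarith
    rw [le_div_iff₀ (by positivity : (0:ℝ) < (j : ℝ) ^ 3)]
    have h1 : A * (27 * (j : ℝ) ^ 3) ≤ A * (x * s) := mul_le_mul_of_nonneg_left s3 hAnn
    have h2 : A * (x * s) = A * x * s := by ring
    linarith [h1, s2, sq_nonneg M, h2.le, h2.ge]
  · -- second estimate
    have hrw : x - a / (4 * (j : ℝ) ^ 3 * π ^ 3) = x - a / (4 * x ^ 3) := by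
      rw [hx]; ring
    rw [hrw]
    have hx4 : x ^ 2 ≤ x ^ 4 := by nlinarith [hx3]
    have hv2 : x / 2 ≤ x - a / (4 * x ^ 3) := by
      have h1 : a / (4 * x ^ 3) ≤ M / (4 * x ^ 3) := by gcongr; exact habs_a.2
      have h2 : M / (4 * x ^ 3) ≤ x / 2 := by
        rw [div_le_div_iff₀ (by positivity) (by positivity)]
        have : x * (4 * x ^ 3) = 4 * x ^ 4 := by ring
        rw [this]
        linarith [hsM, hs, hx4, hMpos]
      linarith
    have hv2pos : (0:ℝ) < x - a / (4 * x ^ 3) := lt_of_lt_of_le (by positivity) hv2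
    have he1 : |w - (2 * s - lam)| ≤ M := by
      have h1 : |w - (2 * s - lam)| * 9 ≤ |w - (2 * s - lam)| * s :=
        mul_le_mul_of_nonneg_left hs9 (abs_nonneg _)
      linarith [h1, hediff, hMpos]
    have hkey : (s * (w - (2 * s - lam)) + a) * (w + (2 * s - lam))
        = a * ((w - (2 * s - lam)) - 2 * lam) := by
      linear_combination s * hprod
    have habs2 : |s * (w - (2 * s - lam)) + a| * (w + (2 * s - lam))
        = |a| * |(w - (2 * s - lam)) - 2 * lam| := by
      rw [← abs_of_nonneg hwtnn, ← abs_mul, hkey, abs_mul]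
    have he2 : |(w - (2 * s - lam)) - 2 * lam| ≤ 3 * M := by
      refine (abs_sub_le' _ _).trans ?_
      have h2l : |2 * lam| = 2 * |lam| := by rw [abs_mul]; norm_num
      rw [h2l]
      linarith [he1, hlamM]
    have hkeyb : |s * (w - (2 * s - lam)) + a| * s ≤ 3 * M ^ 2 := by
      have m1 : |s * (w - (2 * s - lam)) + a| * s
          ≤ |s * (w - (2 * s - lam)) + a| * (w + (2 * s - lam)) :=
        mul_le_mul_of_nonneg_left hwt (abs_nonneg _)
      have m2 : |a| * |(w - (2 * s - lam)) - 2 * lam| ≤ M * (3 * M) :=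
        mul_le_mul haM he2 (abs_nonneg _) hMpos.le
      have : M * (3 * M) = 3 * M ^ 2 := by ring
      linarith [m1, habs2, m2, this.le, this.ge]
    have hid2 : (lam + w) / 2 - (x - a / (4 * x ^ 3)) ^ 2
        = (s * (w - (2 * s - lam)) + a) / (2 * s) - a ^ 2 / (16 * s ^ 3) := by
      rw [hs]; field_simp; ring
    have htri2 : |(lam + w) / 2 - (x - a / (4 * x ^ 3)) ^ 2|
        ≤ |s * (w - (2 * s - lam)) + a| / (2 * s) + a ^ 2 / (16 * s ^ 3) := by
      rw [hid2]
      refine (abs_sub_le' _ _).trans ?_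
      rw [abs_div, abs_of_nonneg (show (0:ℝ) ≤ a ^ 2 / (16 * s ^ 3) by positivity),
        abs_of_nonneg (show (0:ℝ) ≤ 2 * s by positivity)]
    have hf3 : a ^ 2 / (16 * s) ≤ M ^ 2 / 2 :=
      div_le_div₀ (by positivity) ha2 (by norm_num) (by linarith [hs9])
    have hB2s : |(lam + w) / 2 - (x - a / (4 * x ^ 3)) ^ 2| * s ^ 2 ≤ 2 * M ^ 2 := by
      have h1 := mul_le_mul_of_nonneg_right htri2 (sq_nonneg s)
      have h2 : (|s * (w - (2 * s - lam)) + a| / (2 * s) + a ^ 2 / (16 * s ^ 3)) * s ^ 2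
          = |s * (w - (2 * s - lam)) + a| * s / 2 + a ^ 2 / (16 * s) := by
        field_simp
      rw [h2] at h1
      linarith [h1, hkeyb, hf3]
    have hAle := sqrt_close ((lam + w) / 2) (x - a / (4 * x ^ 3)) (by positivity) hv2pos.le
    set A : ℝ := |Real.sqrt ((lam + w) / 2) - (x - a / (4 * x ^ 3))| with hA'
    have hAnn : 0 ≤ A := abs_nonneg _
    have s1 : A * x ≤ 2 * |(lam + w) / 2 - (x - a / (4 * x ^ 3)) ^ 2| := by
      have h1 : A * (x / 2) ≤ A * (x - a / (4 * x ^ 3)) :=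
        mul_le_mul_of_nonneg_left hv2 hAnn
      linarith [hAle, h1]
    have s2 : A * x * s ^ 2 ≤ 4 * M ^ 2 := by
      have h1 := mul_le_mul_of_nonneg_right s1 (sq_nonneg s)
      linarith [h1, hB2s]
    have hxs : x * s ^ 2 = (j : ℝ) ^ 5 * π ^ 5 := by rw [hs, hx]; ring
    have s3 : 243 * (j : ℝ) ^ 5 ≤ x * s ^ 2 := by
      rw [hxs]
      have := mul_le_mul_of_nonneg_left hπ5 (by positivity : (0:ℝ) ≤ (j : ℝ) ^ 5)
      linarith
    rw [le_div_iff₀ (by positivity : (0:ℝ) < (j : ℝ) ^ 5)]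
    have h1 : A * (243 * (j : ℝ) ^ 5) ≤ A * (x * s ^ 2) := mul_le_mul_of_nonneg_left s3 hAnn
    have h2 : A * (x * s ^ 2) = A * x * s ^ 2 := by ring
    linarith [h1, s2, sq_nonneg M, h2.le, h2.ge]
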